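/- Suppose (Z, 0) is the unique minimizer of ‖Z'‖_* + λ‖C'‖_{1,2} subject to Z' + C'·H̄ᵀ = Z (i.e., the attack-free matrix Z bypasses the LD detector), and let C* minimize ‖Z + C·H̄ᵀ‖_* over matrices C with supp(C) ⊆ I. Let Z̄* = Z + C*·H̄ᵀ. Then any optimal solution C^{LD} of the LD detector applied to Z̄* satisfies: either C^{LD} = 0, or supp(C^{LD}) ⊄ I. -/

import Mathlib

open Matrix Finset

/-- Nuclear norm: sum of singular values, i.e. sum of square roots of
eigenvalues of `Aᴴ * A`. -/
noncomputable def nuclearNorm {m n : ℕ} (A : Matrix (Fin m) (Fin n) ℂ) : ℝ :=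
  ∑ i, Real.sqrt ((Matrix.isHermitian_conjTranspose_mul_self A).eigenvalues i)

/-- Column support: set of indices of nonzero columns. -/
def colSupport {N n : ℕ} (C : Matrix (Fin N) (Fin n) ℂ) : Set (Fin n) :=
  {j | ∃ i, C i j ≠ 0}

/-- The `l_{1,2}` norm: sum over columns of the Euclidean norm of the column. -/
noncomputable def l12Norm {N n : ℕ} (C : Matrix (Fin N) (Fin n) ℂ) : ℝ :=
  ∑ j, Real.sqrt (∑ i, ‖C i j‖ ^ 2)

/-- Frobenius norm. -/
noncomputable def frobNorm {N n : ℕ} (A : Matrix (Fin N) (Fin n) ℂ) : ℝ :=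
  Real.sqrt (∑ i, ∑ j, ‖A i j‖ ^ 2)

theorem stmt2 {N nz nb : ℕ} (Z : Matrix (Fin N) (Fin nz) ℂ)
    (Hbar : Matrix (Fin nz) (Fin nb) ℂ) (lam : ℝ) (hlam : 0 < lam)
    (I : Set (Fin nb))
    -- (Z, 0) is the unique minimizer of the LD problem with input Z
    (hBypass : ∀ (Z' : Matrix (Fin N) (Fin nz) ℂ) (C' : Matrix (Fin N) (Fin nb) ℂ),
      Z = Z' + C' * Hbarᵀ → ¬(Z' = Z ∧ C' = 0) →
      nuclearNorm Z < nuclearNorm Z' + lam * l12Norm C')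
    (Cstar : Matrix (Fin N) (Fin nb) ℂ)
    (hCfeas : colSupport Cstar ⊆ I)
    (hCmin : ∀ C : Matrix (Fin N) (Fin nb) ℂ, colSupport C ⊆ I →
      nuclearNorm (Z + Cstar * Hbarᵀ) ≤ nuclearNorm (Z + C * Hbarᵀ))
    (ZLD : Matrix (Fin N) (Fin nz) ℂ) (CLD : Matrix (Fin N) (Fin nb) ℂ)
    -- (ZLD, CLD) is an optimal solution of the LD detector with input Z̄* = Z + C*·H̄ᵀ
    (hfeas : Z + Cstar * Hbarᵀ = ZLD + CLD * Hbarᵀ)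
    (hopt : ∀ (Z' : Matrix (Fin N) (Fin nz) ℂ) (C' : Matrix (Fin N) (Fin nb) ℂ),
      Z + Cstar * Hbarᵀ = Z' + C' * Hbarᵀ →
      nuclearNorm ZLD + lam * l12Norm CLD ≤ nuclearNorm Z' + lam * l12Norm C') :
    CLD = 0 ∨ ¬ colSupport CLD ⊆ I := by
  by_cases hC : CLD = 0
  · exact Or.inl hC
  right
  intro hsub
  have hZLD : Z + (Cstar - CLD) * Hbarᵀ = ZLD := by
    rw [Matrix.sub_mul]
    have h : Z + (Cstar * Hbarᵀ - CLD * Hbarᵀ) = (Z + Cstar * Hbarᵀ) - CLD * Hbarᵀ := by abel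
    rw [h, hfeas, add_sub_cancel_right]
  have hsupp : colSupport (Cstar - CLD) ⊆ I := by
    intro j hj
    obtain ⟨i, hi⟩ := hj
    by_cases h1 : Cstar i j = 0
    · refine hsub ⟨i, fun h => hi ?_⟩
      simp [Matrix.sub_apply, h1, h]
    · exact hCfeas ⟨i, h1⟩
  have h1 : nuclearNorm (Z + Cstar * Hbarᵀ) ≤ nuclearNorm ZLD := by
    have := hCmin (Cstar - CLD) hsupp
    rwa [hZLD] at this
  have h2 := hopt (Z + Cstar * Hbarᵀ) 0 (by simp)
  have hl0 : l12Norm (0 : Matrix (Fin N) (Fin nb) ℂ) = 0 := by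
    simp [l12Norm]
  rw [hl0, mul_zero, add_zero] at h2
  obtain ⟨i, j, hij⟩ : ∃ i j, CLD i j ≠ 0 := by
    by_contra h
    push_neg at h
    exact hC (by ext i j; simp [h i j])
  have hpos : 0 < l12Norm CLD := by
    unfold l12Norm
    apply Finset.sum_pos'
    · intro j _; positivity
    · refine ⟨j, Finset.mem_univ _, Real.sqrt_pos.mpr ?_⟩
      exact Finset.sum_pos' (fun i _ => by positivity) ⟨i, Finset.mem_univ _, pow_pos (norm_pos_iff.mpr hij) 2⟩
  nlinarith [h1, h2, hpos, hlam]
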